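/- arXiv:2109.10804 — 2 statements merged into one kernel-verified Lean document; each statement's English description precedes it below -/
import Mathlib

section
/- Let m ∈ ℂ with |m| = 1 and let e: ℝ → ℂ be a C¹ map satisfying e'(x) = √2 · m · conj(f(e(x))) for all x ∈ ℝ. Then for every compactly supported C¹ function h: ℝ → ℂ, ∫_ℝ ( |h'(x)|² + D²W(e(x))(h(x), h(x)) ) dx ≥ 0. -/
open MeasureTheory Complex Filter

/-- `W(z) = |f(z)|²` as a function of two real variables. -/
noncomputable def W (f : ℂ → ℂ) (z : ℂ) : ℝ := ‖f z‖ ^ 2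

noncomputable def B : ℂ →L[ℝ] ℂ →L[ℝ] ℝ :=
  2 • ((ContinuousLinearMap.compL ℝ ℂ ℂ ℝ Complex.reCLM).comp (ContinuousLinearMap.mul ℝ ℂ))

lemma B_apply (c w : ℂ) : B c w = 2 * (c * w).re := by
  simp [B]

lemma L1 (f : ℂ → ℂ) (hf : Differentiable ℂ f) (z : ℂ) :
    HasFDerivAt (W f) (B ((starRingEnd ℂ) (f z) * deriv f z)) z := by
  have hd : HasDerivAt f (deriv f z) z := (hf z).hasDerivAt
  have hFR : HasFDerivAt f (((1 : ℂ →L[ℂ] ℂ).smulRight (deriv f z)).restrictScalars ℝ) z :=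
    hd.hasFDerivAt.restrictScalars ℝ
  have hW := hFR.norm_sq
  have hWe : W f = fun w => ‖f w‖ ^ 2 := by
    funext w; simp [W]
  rw [hWe]
  refine hW.congr_fderiv (Eq.symm ?_)
  ext w
  simp [B, Complex.inner, ContinuousLinearMap.smul_apply, smul_eq_mul]
  ring

lemma hf1 (f : ℂ → ℂ) (hf : Differentiable ℂ f) : Differentiable ℂ (deriv f) := by
  have hA : AnalyticOnNhd ℂ f Set.univ := fun z _ => hf.analyticAt z
  exact fun z => (hA.deriv z (Set.mem_univ z)).differentiableAt

lemma hessApply (f : ℂ → ℂ) (hf : Differentiable ℂ f) (z v w : ℂ) :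
    fderiv ℝ (fderiv ℝ (W f)) z v w =
      2 * (((starRingEnd ℂ) (f z) * (v * deriv (deriv f) z)
        + deriv f z * (starRingEnd ℂ) (v * deriv f z)) * w).re := by
  have hf1' := hf1 f hf
  have hFR : HasFDerivAt f (((1 : ℂ →L[ℂ] ℂ).smulRight (deriv f z)).restrictScalars ℝ) z :=
    (hf z).hasDerivAt.hasFDerivAt.restrictScalars ℝ
  have hFR1 : HasFDerivAt (deriv f)
      (((1 : ℂ →L[ℂ] ℂ).smulRight (deriv (deriv f) z)).restrictScalars ℝ) z :=
    (hf1' z).hasDerivAt.hasFDerivAt.restrictScalars ℝ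
  set L : ℂ →L[ℝ] ℂ := Complex.conjCLE.toContinuousLinearMap with hL
  have hconj : HasFDerivAt (fun w => (starRingEnd ℂ) (f w))
      (L.comp (((1 : ℂ →L[ℂ] ℂ).smulRight (deriv f z)).restrictScalars ℝ)) z :=
    L.hasFDerivAt.comp z hFR
  have hg := hconj.mul hFR1
  have e1 : fderiv ℝ (W f) = fun w => B ((starRingEnd ℂ) (f w) * deriv f w) :=
    funext fun w => (L1 f hf w).fderiv
  have e2 : fderiv ℝ (fderiv ℝ (W f)) z = B.comp
      ((starRingEnd ℂ) (f z) • ((1 : ℂ →L[ℂ] ℂ).smulRight (deriv (deriv f) z)).restrictScalars ℝ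
        + deriv f z • (L.comp (((1 : ℂ →L[ℂ] ℂ).smulRight (deriv f z)).restrictScalars ℝ))) := by
    rw [e1]
    exact (B.hasFDerivAt.comp z hg).fderiv
  rw [e2]
  simp [B_apply, hL, smul_eq_mul]
  ring

/-- If `|m| = 1` and `e' = √2 m conj(f(e))`, then for every compactly supported `C¹`
function `h : ℝ → ℂ`, the second variation `∫ (|h'|² + D²W(e)(h,h))` is nonnegative. -/
theorem statement9 (f : ℂ → ℂ) (hf : Differentiable ℂ f)
    (m : ℂ) (hm : ‖m‖ = 1) (e : ℝ → ℂ)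
    (he : ∀ x : ℝ, HasDerivAt e ((Real.sqrt 2 : ℂ) * m * (starRingEnd ℂ) (f (e x))) x)
    (h : ℝ → ℂ) (hh : ContDiff ℝ 1 h) (hsupp : HasCompactSupport h) :
    0 ≤ ∫ x : ℝ, (‖deriv h x‖ ^ 2 + fderiv ℝ (fderiv ℝ (W f)) (e x) (h x) (h x)) := by
  have hf1' : Differentiable ℂ (deriv f) := hf1 f hf
  have hf2' : Differentiable ℂ (deriv (deriv f)) := hf1 _ hf1'
  have hde : Differentiable ℝ e := fun x => (he x).differentiableAt
  have hce : Continuous e := hde.continuous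
  have hch : Continuous h := hh.continuous
  have hdh : Differentiable ℝ h := hh.differentiable one_ne_zero
  have hcdh : Continuous (deriv h) := hh.continuous_deriv le_rfl
  set s : ℝ := Real.sqrt 2 with hsdef
  have hs : s ^ 2 = 2 := Real.sq_sqrt (by norm_num)
  have hm1 : Complex.normSq m = 1 := by
    rw [Complex.normSq_eq_norm_sq, hm]; norm_num
  have hm1' : m.re * m.re + m.im * m.im = 1 := by
    have := hm1; rwa [Complex.normSq_apply] at this
  have hm2 : (starRingEnd ℂ) m * m = 1 := by
    rw [mul_comm, Complex.mul_conj, hm1]; norm_num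
  have hs2 : (s : ℂ) * (s : ℂ) = 2 := by
    have : ((s^2 : ℝ) : ℂ) = 2 := by rw [hs]; norm_num
    rw [← this]; push_cast; ring
  set A : ℝ → ℂ := fun x => (s : ℂ) * m * (starRingEnd ℂ) (deriv f (e x) * h x) with hAdef
  set Φ : ℝ → ℂ := fun x => (s : ℂ) * (starRingEnd ℂ) m * deriv f (e x) * h x ^ 2 with hΦdef
  set ψ : ℝ → ℂ := fun x =>
      2 * ((starRingEnd ℂ) (f (e x)) * deriv (deriv f) (e x)) * h x ^ 2
      + (s : ℂ) * (starRingEnd ℂ) m * deriv f (e x) * (2 * h x * deriv h x) with hψdef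
  -- derivative of Φ
  have hΦd : ∀ x, HasDerivAt Φ (ψ x) x := by
    intro x
    have h1 : HasDerivAt (fun x => deriv f (e x))
        (((s : ℂ) * m * (starRingEnd ℂ) (f (e x))) • deriv (deriv f) (e x)) x := by
      exact HasDerivAt.scomp x ((hf1' (e x)).hasDerivAt) (he x)
    have h2 : HasDerivAt (fun x => h x ^ 2) ((2 : ℂ) * h x * deriv h x) x := by
      have h2' := ((hdh x).hasDerivAt).mul ((hdh x).hasDerivAt)
      simp only [pow_two]
      exact h2'.congr_deriv (by ring)
    have h3 := (h1.const_mul ((s : ℂ) * (starRingEnd ℂ) m)).mul h2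
    refine h3.congr_deriv (Eq.symm ?_)
    simp only [smul_eq_mul]
    linear_combination (-((starRingEnd ℂ) (f (e x)) * deriv (deriv f) (e x) * h x ^ 2)) * hs2
      + (-((s:ℂ) * (s:ℂ) * (starRingEnd ℂ) (f (e x)) * deriv (deriv f) (e x) * h x ^ 2)) * hm2
  have hΦre : ∀ x, HasDerivAt (fun x => (Φ x).re) ((ψ x).re) x := by
    intro x
    exact (Complex.reCLM.hasFDerivAt.comp_hasDerivAt x (hΦd x))
  -- compact support
  have hzero : ∀ x ∉ tsupport h, h x = 0 := fun x hx => image_eq_zero_of_notMem_tsupport hx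
  have hdzero : ∀ x ∉ tsupport h, deriv h x = 0 := fun x hx =>
    Function.notMem_support.mp (fun hx' => hx (support_deriv_subset hx'))
  have hcs1 : HasCompactSupport (fun x => Complex.normSq (deriv h x - A x)) :=
    HasCompactSupport.intro hsupp (fun x hx => by simp [hAdef, hzero x hx, hdzero x hx])
  have hcs2 : HasCompactSupport (fun x => (ψ x).re) :=
    HasCompactSupport.intro hsupp (fun x hx => by simp [hψdef, hzero x hx, hdzero x hx])
  have hcs3 : HasCompactSupport (fun x => (Φ x).re) :=
    HasCompactSupport.intro hsupp (fun x hx => by simp [hΦdef, hzero x hx])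
  -- continuity
  have hcb : Continuous fun x => deriv f (e x) := hf1'.continuous.comp hce
  have hcc : Continuous fun x => deriv (deriv f) (e x) := hf2'.continuous.comp hce
  have hcF : Continuous fun x => f (e x) := hf.continuous.comp hce
  have hcont1 : Continuous fun x => Complex.normSq (deriv h x - A x) :=
    Complex.continuous_normSq.comp (hcdh.sub
      (continuous_const.mul (Complex.continuous_conj.comp (hcb.mul hch))))
  have hcont2 : Continuous fun x => (ψ x).re :=
    Complex.continuous_re.comp
      (((continuous_const.mul ((Complex.continuous_conj.comp hcF).mul hcc)).mul
          (hch.pow 2)).add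
        ((continuous_const.mul hcb).mul ((continuous_const.mul hch).mul hcdh)))
  have hcont3 : Continuous fun x => (Φ x).re :=
    Complex.continuous_re.comp ((continuous_const.mul hcb).mul (hch.pow 2))
  have hint1 : Integrable (fun x => Complex.normSq (deriv h x - A x)) :=
    hcont1.integrable_of_hasCompactSupport hcs1
  have hint2 : Integrable (fun x => (ψ x).re) :=
    hcont2.integrable_of_hasCompactSupport hcs2
  have hint3 : Integrable (fun x => (Φ x).re) :=
    hcont3.integrable_of_hasCompactSupport hcs3
  -- pointwise identity
  have hpoint : (fun x => ‖deriv h x‖ ^ 2 + fderiv ℝ (fderiv ℝ (W f)) (e x) (h x) (h x))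
      = fun x => Complex.normSq (deriv h x - A x) + (ψ x).re := by
    funext x
    rw [hessApply f hf]
    rw [Complex.sq_norm]
    set a := deriv h x
    set b := deriv f (e x)
    set c := deriv (deriv f) (e x)
    set F := f (e x)
    set w := h x
    have N := (b.re * w.re - b.im * w.im) ^ 2 + (b.re * w.im + b.im * w.re) ^ 2
    simp only [hAdef, hψdef, Complex.normSq_apply, Complex.normSq_sub, Complex.mul_re,
      Complex.mul_im, Complex.add_re, Complex.add_im, Complex.sub_re, Complex.sub_im,
      Complex.conj_re, Complex.conj_im, Complex.ofReal_re, Complex.ofReal_im,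
      Complex.re_ofNat, Complex.im_ofNat, pow_two]
    ring_nf
    linear_combination (-(((b.re * w.re - b.im * w.im) ^ 2 + (b.re * w.im + b.im * w.re) ^ 2))
        * (m.re * m.re + m.im * m.im)) * hs
      + (-(2 * ((b.re * w.re - b.im * w.im) ^ 2 + (b.re * w.im + b.im * w.re) ^ 2))) * hm1'
  rw [hpoint, integral_add hint1 hint2,
    integral_eq_zero_of_hasDerivAt_of_integrable hΦre hint2 hint3, add_zero]
  exact integral_nonneg (fun x => Complex.normSq_nonneg _)
end

section
/- Let e: ℝ → ℂ be a heteroclinic orbit of W connecting two distinct zeros a^± of f, i.e. a C² solution of e''(x) = ∇W(e(x)) with lim_{x→±∞} e(x) = a^±, f(a^±) = 0, a^− ≠ a^+, and lim_{x→±∞} e'(x) = 0, and let m ∈ ℂ, |m| = 1, be such that e'(x) = √2·m·conj(f(e(x))) for all x. Let h: ℝ → ℂ be a C² map such that h and h' are square-integrable on ℝ, h(x) → 0 and h'(x) → 0 as x → ±∞, and h''(x) = D²W(e(x))·h(x) for all x ∈ ℝ (the Hessian acting as a real-linear map). Then h'(x) = √2·m·conj( f'(e(x))·h(x) ) for all x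 ∈ ℝ. -/
open MeasureTheory Complex Filter

noncomputable def Phi : ℂ →L[ℝ] (ℂ →L[ℝ] ℝ) :=
  (ContinuousLinearMap.compL ℝ ℂ ℂ ℝ Complex.reCLM).comp (ContinuousLinearMap.mul ℝ ℂ)

@[simp] lemma Phi_apply (a k : ℂ) : Phi a k = (a * k).re := rfl

lemma hasFDerivAt_W (f : ℂ → ℂ) (hf : Differentiable ℂ f) (z : ℂ) :
    HasFDerivAt (W f) (Phi (2 * (starRingEnd ℂ) (f z) * deriv f z)) z := by
  have h1 : HasFDerivAt f
      ((ContinuousLinearMap.smulRight (1 : ℂ →L[ℂ] ℂ) (deriv f z)).restrictScalars ℝ) z :=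
    (hasDerivAt_iff_hasFDerivAt.mp (hf z).hasDerivAt).restrictScalars ℝ
  have h2 : HasFDerivAt (fun w => (starRingEnd ℂ) (f w))
      ((Complex.conjCLE.toContinuousLinearMap).comp
        ((ContinuousLinearMap.smulRight (1 : ℂ →L[ℂ] ℂ) (deriv f z)).restrictScalars ℝ)) z :=
    (Complex.conjCLE.toContinuousLinearMap.hasFDerivAt).comp z h1
  have h3 := h1.mul h2
  have h4 := (Complex.reCLM.hasFDerivAt).comp z h3
  have hWe : W f = fun w => (f w * (starRingEnd ℂ) (f w)).re := by
    funext w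
    simp [W, Complex.sq_norm, Complex.mul_conj]
  rw [hWe]
  refine h4.congr_fderiv ?_
  ext k
  simp [Complex.mul_re, Complex.mul_im, Complex.conjCLE_apply]
  ring

lemma fderiv_fderiv_W (f : ℂ → ℂ) (hf : Differentiable ℂ f) (z h k : ℂ) :
    fderiv ℝ (fderiv ℝ (W f)) z h k
      = (2 * ((starRingEnd ℂ) (deriv f z) * deriv f z * (starRingEnd ℂ) h
          + (starRingEnd ℂ) (f z) * deriv (deriv f) z * h) * k).re := by
  have hf' : Differentiable ℂ (deriv f) :=
    ((contDiff_infty_iff_deriv.mp hf.contDiff).2).differentiable (by simp)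
  have hW : fderiv ℝ (W f) = fun w => Phi (2 * (starRingEnd ℂ) (f w) * deriv f w) :=
    funext fun w => (hasFDerivAt_W f hf w).fderiv
  rw [hW]
  have h1 : HasFDerivAt f
      ((ContinuousLinearMap.smulRight (1 : ℂ →L[ℂ] ℂ) (deriv f z)).restrictScalars ℝ) z :=
    (hasDerivAt_iff_hasFDerivAt.mp (hf z).hasDerivAt).restrictScalars ℝ
  have h2 : HasFDerivAt (fun w => (starRingEnd ℂ) (f w))
      ((Complex.conjCLE.toContinuousLinearMap).comp
        ((ContinuousLinearMap.smulRight (1 : ℂ →L[ℂ] ℂ) (deriv f z)).restrictScalars ℝ)) z :=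
    (Complex.conjCLE.toContinuousLinearMap.hasFDerivAt).comp z h1
  have h2' := h2.const_mul (2 : ℂ)
  have h3 : HasFDerivAt (deriv f)
      ((ContinuousLinearMap.smulRight (1 : ℂ →L[ℂ] ℂ) (deriv (deriv f) z)).restrictScalars ℝ) z :=
    (hasDerivAt_iff_hasFDerivAt.mp (hf' z).hasDerivAt).restrictScalars ℝ
  have h4 := h2'.mul h3
  have h5 : HasFDerivAt (fun w => Phi (2 * (starRingEnd ℂ) (f w) * deriv f w)) _ z :=
    (Phi.hasFDerivAt).comp z h4
  rw [h5.fderiv]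
  simp [Complex.mul_re, Complex.mul_im, Complex.conjCLE_apply]
  ring

/-- Let `e` be a heteroclinic orbit of `W` connecting two distinct zeros `a^±` of
`f` (a `C²` solution of `e'' = ∇W(e)` with `e → a^±`, `e' → 0` at `±∞`), and let
`m`, `|m| = 1`, be such that `e' = √2 m conj(f(e))`.  If `h` is a `C²` map with
`h, h' ∈ L²`, `h → 0`, `h' → 0` at `±∞`, solving the linearized equation
`h'' = D²W(e)·h` (the Hessian acting as a real-linear map, characterized by
`⟨h'', k⟩_{ℝ²} = Re(conj(h'') k) = D²W(e)(h, k)` for all `k`), then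
`h' = √2 m conj(f'(e) h)` everywhere. -/
theorem statement12 (f : ℂ → ℂ) (hf : Differentiable ℂ f)
    (e : ℝ → ℂ) (he : ContDiff ℝ 2 e)
    (hODE : ∀ x : ℝ, deriv (deriv e) x = gradient (W f) (e x))
    (aminus aplus : ℂ) (hfm : f aminus = 0) (hfp : f aplus = 0) (hne : aminus ≠ aplus)
    (hlimB : Tendsto e atBot (nhds aminus)) (hlimT : Tendsto e atTop (nhds aplus))
    (hlimB' : Tendsto (deriv e) atBot (nhds 0)) (hlimT' : Tendsto (deriv e) atTop (nhds 0))
    (m : ℂ) (hm : ‖m‖ = 1)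
    (hem : ∀ x : ℝ, deriv e x = (Real.sqrt 2 : ℂ) * m * (starRingEnd ℂ) (f (e x)))
    (h : ℝ → ℂ) (hh : ContDiff ℝ 2 h)
    (hL2 : MemLp h 2 volume) (hL2' : MemLp (deriv h) 2 volume)
    (hh0B : Tendsto h atBot (nhds 0)) (hh0T : Tendsto h atTop (nhds 0))
    (hh1B : Tendsto (deriv h) atBot (nhds 0)) (hh1T : Tendsto (deriv h) atTop (nhds 0))
    (hlin : ∀ x : ℝ, ∀ k : ℂ,
      ((starRingEnd ℂ) (deriv (deriv h) x) * k).re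
        = fderiv ℝ (fderiv ℝ (W f)) (e x) (h x) k) :
    ∀ x : ℝ, deriv h x
      = (Real.sqrt 2 : ℂ) * m * (starRingEnd ℂ) (deriv f (e x) * h x) := by
  have hf' : Differentiable ℂ (deriv f) :=
    ((contDiff_infty_iff_deriv.mp hf.contDiff).2).differentiable (by simp)
  have hmm : m * (starRingEnd ℂ) m = 1 := by
    rw [Complex.mul_conj, Complex.normSq_eq_norm_sq, hm]
    norm_num
  have hs2 : (Real.sqrt 2 : ℂ) * (Real.sqrt 2 : ℂ) = 2 := by
    rw [← Complex.ofReal_mul, Real.mul_self_sqrt (by norm_num : (0:ℝ) ≤ 2)]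
    norm_num
  -- second derivative of h
  have key2 : ∀ x : ℝ, deriv (deriv h) x
      = 2 * (deriv f (e x) * (starRingEnd ℂ) (deriv f (e x)) * h x
          + f (e x) * (starRingEnd ℂ) (deriv (deriv f) (e x)) * (starRingEnd ℂ) (h x)) := by
    intro x
    have hq : ∀ k : ℂ, ((starRingEnd ℂ) (deriv (deriv h) x) * k).re
        = ((2 * ((starRingEnd ℂ) (deriv f (e x)) * deriv f (e x) * (starRingEnd ℂ) (h x)
            + (starRingEnd ℂ) (f (e x)) * deriv (deriv f) (e x) * h x)) * k).re := by
      intro k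
      rw [hlin x k, fderiv_fderiv_W f hf]
    have hre := hq 1
    have him := hq (-Complex.I)
    simp [Complex.mul_re, Complex.mul_im] at hre him
    rw [show deriv (deriv h) x = (starRingEnd ℂ) ((starRingEnd ℂ) (deriv (deriv h) x)) by simp]
    apply Complex.ext <;>
      simp [Complex.mul_re, Complex.mul_im, Complex.add_re, Complex.add_im] <;>
      nlinarith [hre, him]
  -- basic derivative facts
  have hde : ∀ x : ℝ, HasDerivAt e (deriv e x) x :=
    fun x => ((he.differentiable (by norm_num)) x).hasDerivAt
  have hdh : ∀ x : ℝ, HasDerivAt h (deriv h x) x :=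
    fun x => ((hh.differentiable (by norm_num)) x).hasDerivAt
  have hh2 : ContDiff ℝ (1 + 1) h := by exact_mod_cast hh
  have hdh' : ∀ x : ℝ, HasDerivAt (deriv h) (deriv (deriv h) x) x :=
    fun x => ((((contDiff_succ_iff_deriv.mp hh2).2.2).differentiable one_ne_zero) x).hasDerivAt
  set cc : ℝ → ℂ := fun x => (Real.sqrt 2 : ℂ) * m * (starRingEnd ℂ) (deriv f (e x)) with hcc_def
  have hconjh : ∀ x : ℝ, HasDerivAt (fun y => (starRingEnd ℂ) (h y)) ((starRingEnd ℂ) (deriv h x)) x := by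
    intro x
    have := Complex.conjCLE.toContinuousLinearMap.hasFDerivAt.comp_hasDerivAt x (hdh x)
    exact this
  have hccd : ∀ x : ℝ, HasDerivAt cc
      (2 * f (e x) * (starRingEnd ℂ) (deriv (deriv f) (e x))) x := by
    intro x
    have h1 : HasFDerivAt (fun z => (starRingEnd ℂ) (deriv f z))
        ((Complex.conjCLE.toContinuousLinearMap).comp
          ((ContinuousLinearMap.smulRight (1 : ℂ →L[ℂ] ℂ)
            (deriv (deriv f) (e x))).restrictScalars ℝ)) (e x) :=
      (Complex.conjCLE.toContinuousLinearMap.hasFDerivAt).comp (e x)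
        ((hasDerivAt_iff_hasFDerivAt.mp (hf' (e x)).hasDerivAt).restrictScalars ℝ)
    have h2 := h1.comp_hasDerivAt x (hde x)
    have h3 := h2.const_mul ((Real.sqrt 2 : ℂ) * m)
    have h4 : HasDerivAt cc
        ((Real.sqrt 2 : ℂ) * m * ((starRingEnd ℂ) (deriv e x * deriv (deriv f) (e x)))) x := by
      rw [hcc_def]
      refine h3.congr_deriv ?_
      simp
    convert h4 using 1
    rw [hem x]
    simp only [map_mul, Complex.conj_conj, Complex.conj_ofReal]
    set F := f (e x) * (starRingEnd ℂ) (deriv (deriv f) (e x)) with hF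
    have : (Real.sqrt 2 : ℂ) * m * ((Real.sqrt 2 : ℂ) * (starRingEnd ℂ) m * f (e x)
        * (starRingEnd ℂ) (deriv (deriv f) (e x)))
        = ((Real.sqrt 2 : ℂ) * (Real.sqrt 2 : ℂ)) * (m * (starRingEnd ℂ) m) * F := by
      rw [hF]; ring
    rw [this, hs2, hmm, hF]
    ring
  set u : ℝ → ℂ := fun x => deriv h x - cc x * (starRingEnd ℂ) (h x) with hu_def
  have hud : ∀ x : ℝ, HasDerivAt u (-(cc x) * (starRingEnd ℂ) (u x)) x := by
    intro x
    have hstep := (hdh' x).sub ((hccd x).mul (hconjh x))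
    refine hstep.congr_deriv ?_
    rw [hu_def, hcc_def, key2 x]
    simp only [map_mul, map_sub, Complex.conj_conj, Complex.conj_ofReal]
    set A := deriv f (e x)
    set B := h x
    set Bh := deriv h x
    set P := f (e x)
    set Q := deriv (deriv f) (e x)
    have expand : -((Real.sqrt 2:ℂ) * m * (starRingEnd ℂ) A)
          * ((starRingEnd ℂ) Bh - (Real.sqrt 2:ℂ) * (starRingEnd ℂ) m * A * B)
        = -((Real.sqrt 2:ℂ) * m * (starRingEnd ℂ) A) * (starRingEnd ℂ) Bh
          + ((Real.sqrt 2:ℂ) * (Real.sqrt 2:ℂ)) * (m * (starRingEnd ℂ) m)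
            * ((starRingEnd ℂ) A * A * B) := by ring
    rw [expand, hs2, hmm]
    ring
  set ps : ℝ → ℝ := fun x => ((starRingEnd ℂ) (h x) * u x).re with hps_def
  have hpsd : ∀ x : ℝ, HasDerivAt ps (Complex.normSq (u x)) x := by
    intro x
    have hmul := (hconjh x).mul (hud x)
    have hcomp := Complex.reCLM.hasFDerivAt.comp_hasDerivAt x hmul
    have hps : HasDerivAt ps
        (((starRingEnd ℂ) (deriv h x) * u x
          + (starRingEnd ℂ) (h x) * (-(cc x) * (starRingEnd ℂ) (u x))).re) x := by
      rw [hps_def]; exact hcomp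
    convert hps using 1
    rw [hu_def]
    simp only [Complex.normSq_apply, Complex.add_re, Complex.mul_re, Complex.mul_im,
      Complex.sub_re, Complex.sub_im, Complex.conj_re, Complex.conj_im,
      Complex.neg_re, Complex.neg_im]
    ring
  have hmono : Monotone ps :=
    monotone_of_deriv_nonneg (fun x => (hpsd x).differentiableAt)
      (fun x => by rw [(hpsd x).deriv]; exact Complex.normSq_nonneg _)
  have hcontconj : Continuous fun z : ℂ => (starRingEnd ℂ) z := Complex.continuous_conj
  have hccT : Tendsto cc atTop (nhds ((Real.sqrt 2 : ℂ) * m * (starRingEnd ℂ) (deriv f aplus))) := by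
    rw [hcc_def]
    exact ((continuous_const.mul (hcontconj.comp hf'.continuous)).tendsto aplus).comp hlimT
  have hccB : Tendsto cc atBot (nhds ((Real.sqrt 2 : ℂ) * m * (starRingEnd ℂ) (deriv f aminus))) := by
    rw [hcc_def]
    exact ((continuous_const.mul (hcontconj.comp hf'.continuous)).tendsto aminus).comp hlimB
  have hconjhT : Tendsto (fun x => (starRingEnd ℂ) (h x)) atTop (nhds 0) := by
    have := (hcontconj.tendsto 0).comp hh0T
    rw [map_zero] at this
    exact this
  have hconjhB : Tendsto (fun x => (starRingEnd ℂ) (h x)) atBot (nhds 0) := by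
    have := (hcontconj.tendsto 0).comp hh0B
    rw [map_zero] at this
    exact this
  have huT : Tendsto u atTop (nhds 0) := by
    rw [hu_def]
    have := hh1T.sub (hccT.mul hconjhT)
    simpa using this
  have huB : Tendsto u atBot (nhds 0) := by
    rw [hu_def]
    have := hh1B.sub (hccB.mul hconjhB)
    simpa using this
  have hmulT : Tendsto (fun x => (starRingEnd ℂ) (h x) * u x) atTop (nhds 0) := by
    simpa using hconjhT.mul huT
  have hmulB : Tendsto (fun x => (starRingEnd ℂ) (h x) * u x) atBot (nhds 0) := by
    simpa using hconjhB.mul huB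
  have hpsT : Tendsto ps atTop (nhds 0) := by
    rw [hps_def]
    exact (Complex.continuous_re.tendsto 0).comp hmulT
  have hpsB : Tendsto ps atBot (nhds 0) := by
    rw [hps_def]
    exact (Complex.continuous_re.tendsto 0).comp hmulB
  have hps0 : ∀ x : ℝ, ps x = 0 :=
    fun x => le_antisymm (hmono.ge_of_tendsto hpsT x) (hmono.le_of_tendsto hpsB x)
  have hu0 : ∀ x : ℝ, u x = 0 := by
    intro x
    have h1 : deriv ps x = Complex.normSq (u x) := (hpsd x).deriv
    have h2 : deriv ps x = 0 := by
      have : ps = fun _ => (0 : ℝ) := funext hps0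
      rw [this]
      simp
    exact Complex.normSq_eq_zero.mp (by rw [← h1, h2])
  intro x
  have hux := hu0 x
  rw [hu_def] at hux
  have hder : deriv h x = cc x * (starRingEnd ℂ) (h x) := by
    have := sub_eq_zero.mp hux
    exact this
  rw [hder, hcc_def, map_mul]
  ring
end
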